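/- If h(z) = z - z²/2 and g(z) = z²/2 - z³/3, then the harmonic function f = h + conj(g) satisfies f(z₀) = f(conj(z₀)) = 3/4 for z₀ = (3 + √3 i)/4, and |z₀| < 1; hence f is not injective on the unit disk. -/

import Mathlib

open Complex Metric

theorem stmt0
    (h g f : ℂ → ℂ)
    (hh : ∀ z, h z = z - z ^ 2 / 2)
    (hg : ∀ z, g z = z ^ 2 / 2 - z ^ 3 / 3)
    (hf : ∀ z, f z = h z + (starRingEnd ℂ) (g z))
    (z₀ : ℂ) (hz₀ : z₀ = (3 + Real.sqrt 3 * I) / 4) :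
    f z₀ = 3 / 4 ∧ f ((starRingEnd ℂ) z₀) = 3 / 4 ∧ ‖z₀‖ < 1 ∧
      ¬ Set.InjOn f (ball (0 : ℂ) 1) := by
  set s : ℝ := Real.sqrt 3 with hsdef
  have hs : (s : ℂ) ^ 2 = 3 := by
    norm_cast
    rw [sq]
    exact_mod_cast Real.mul_self_sqrt (by norm_num)
  have hconj : (starRingEnd ℂ) z₀ = (3 - s * I) / 4 := by
    rw [hz₀]
    simp only [map_div₀, map_add, map_mul, map_ofNat, Complex.conj_I,
      Complex.conj_ofReal]
    ring
  have hI : (I : ℂ) ^ 2 = -1 := Complex.I_sq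
  have key1 : f z₀ = 3 / 4 := by
    rw [hf, hh, hg]
    simp only [map_sub, map_div₀, map_pow, map_add, map_mul, map_ofNat,
      Complex.conj_I, Complex.conj_ofReal]
    rw [hconj, hz₀]
    linear_combination ((-3/64 : ℂ) * I ^ 2 + (1/192 : ℂ) * s * I ^ 3) * hs +
      ((-9/64 : ℂ) + (1/64 : ℂ) * s * I) * hI
  have key2 : f ((starRingEnd ℂ) z₀) = 3 / 4 := by
    rw [hf, hh, hg, hconj]
    simp only [map_sub, map_div₀, map_pow, map_add, map_mul, map_ofNat,
      Complex.conj_I, Complex.conj_ofReal]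
    linear_combination ((-3/64 : ℂ) * I ^ 2 - (1/192 : ℂ) * s * I ^ 3) * hs +
      ((-9/64 : ℂ) - (1/64 : ℂ) * s * I) * hI
  have hnorm : ‖z₀‖ < 1 := by
    have : ‖z₀‖ ^ 2 = 3 / 4 := by
      rw [Complex.sq_norm, hz₀]
      simp [Complex.normSq_apply, Complex.div_re, Complex.div_im, Complex.normSq_apply]
      nlinarith [Real.sq_sqrt (by norm_num : (3:ℝ) ≥ 0), Real.sqrt_nonneg 3]
    nlinarith [norm_nonneg z₀]
  refine ⟨key1, key2, hnorm, ?_⟩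
  intro hinj
  have hne : z₀ ≠ (starRingEnd ℂ) z₀ := by
    rw [hconj, hz₀]
    intro hcontra
    have him := congrArg Complex.im hcontra
    simp [Complex.div_im, Complex.add_im, Complex.sub_im] at him
    have hpos : Real.sqrt 3 > 0 := Real.sqrt_pos.mpr (by norm_num)
    linarith [him]
  have h1 : z₀ ∈ ball (0 : ℂ) 1 := by simpa using hnorm
  have h2 : (starRingEnd ℂ) z₀ ∈ ball (0 : ℂ) 1 := by
    simp only [mem_ball, dist_zero_right] at *
    simpa using hnorm
  exact hne (hinj h1 h2 (key1.trans key2.symm))
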